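/- arXiv:0801.3696 — 2 statements merged into one kernel-verified Lean document; each statement's English description precedes it below -/
import Mathlib

section
/- Let G and H be nontrivial finite groups. Then every finite normal subgroup of the free product G ∗ H is trivial. -/
open Monoid

namespace FPAux

variable {ι : Type*} {M : ι → Type*} [∀ i, Group (M i)]

theorem neword_prod_ne_one {i j : ι} (w : CoprodI.NeWord M i j) :
    w.prod ≠ 1 := by
  classical
  intro h
  have hinj : Function.Injective (CoprodI.Word.prod (M := M)) := by
    intro a b hab
    have ha := CoprodI.Word.equiv (M := M) |>.right_inv a
    have hb := CoprodI.Word.equiv (M := M) |>.right_inv b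
    calc a = CoprodI.Word.equiv a.prod := ha.symm
    _ = CoprodI.Word.equiv b.prod := by rw [hab]
    _ = b := hb
  have hw : w.toWord = CoprodI.Word.empty := hinj (by simpa [CoprodI.NeWord.prod] using h)
  exact w.toList_ne_nil (by rw [show w.toList = w.toWord.toList from rfl, hw]; rfl)

/-- repeated concatenation of a non-empty word with distinct first and last indices -/
def repw {i j : ι} (hji : j ≠ i) (w : CoprodI.NeWord M i j) : ℕ → CoprodI.NeWord M i j
  | 0 => w
  | n + 1 => CoprodI.NeWord.append w hji (repw hji w n)

theorem repw_prod {i j : ι} (hji : j ≠ i) (w : CoprodI.NeWord M i j) (n : ℕ) :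
    (repw hji w n).prod = w.prod ^ (n + 1) := by
  induction n with
  | zero => simp [repw]
  | succ n ih => rw [repw, CoprodI.NeWord.append_prod, ih, ← pow_succ']

theorem prod_pow_ne_one {i j : ι} (hij : i ≠ j) (w : CoprodI.NeWord M i j) {n : ℕ}
    (hn : n ≠ 0) : w.prod ^ n ≠ 1 := by
  obtain ⟨m, rfl⟩ := Nat.exists_eq_succ_of_ne_zero hn
  rw [← repw_prod (Ne.symm hij) w m]
  exact neword_prod_ne_one _

theorem exists_conj_aux (x : CoprodI M) (hx : x ≠ 1)
    (hfac : ∀ i : ι, ∃ (k : ι) (m : M k), k ≠ i ∧ m ≠ 1) :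
    ∃ c : CoprodI M, ∀ n : ℕ, n ≠ 0 → (x * (c * x * c⁻¹)) ^ n ≠ 1 := by
  classical
  have hw : (CoprodI.Word.equiv (M := M) x).prod = x := CoprodI.Word.equiv.left_inv x
  have hne : CoprodI.Word.equiv (M := M) x ≠ CoprodI.Word.empty := by
    intro h; rw [h] at hw; exact hx (by simpa using hw.symm)
  obtain ⟨i, j, w', hw'⟩ := CoprodI.NeWord.of_word _ hne
  have hprod : w'.prod = x := by rw [CoprodI.NeWord.prod, hw', hw]
  by_cases hij : i = j
  · subst hij
    obtain ⟨k, m, hki, hm⟩ := hfac i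
    refine ⟨CoprodI.of m, fun n hn => ?_⟩
    have hm' : m⁻¹ ≠ 1 := inv_ne_one.2 hm
    set W : CoprodI.NeWord M i k :=
      CoprodI.NeWord.append
        (CoprodI.NeWord.append
          (CoprodI.NeWord.append w' (Ne.symm hki) (CoprodI.NeWord.singleton m hm))
          hki w')
        (Ne.symm hki) (CoprodI.NeWord.singleton m⁻¹ hm') with hW
    have : W.prod = x * (CoprodI.of m * x * (CoprodI.of m)⁻¹) := by
      simp [hW, hprod, mul_assoc]
    rw [← this]
    exact prod_pow_ne_one (Ne.symm hki) W hn
  · refine ⟨1, fun n hn => ?_⟩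
    have : x * (1 * x * 1⁻¹) = w'.prod ^ 2 := by rw [hprod]; simp [pow_two]
    rw [this, ← pow_mul]
    exact prod_pow_ne_one hij w' (by omega)

end FPAux

namespace FPAux2

universe u v
variable (G : Type u) (H : Type v) [Group G] [Group H]

abbrev F : Bool → Type (max u v) := fun b => cond b (ULift.{v} G) (ULift.{u} H)

instance : ∀ b, Group (F G H b) := fun b => by cases b <;> dsimp [F] <;> infer_instance

def φ : Coprod G H →* CoprodI (F G H) :=
  Coprod.lift
    ((CoprodI.of (M := F G H) (i := true)).comp (MulEquiv.ulift.symm : G ≃* ULift G).toMonoidHom)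
    ((CoprodI.of (M := F G H) (i := false)).comp (MulEquiv.ulift.symm : H ≃* ULift H).toMonoidHom)

def ψ : CoprodI (F G H) →* Coprod G H :=
  CoprodI.lift fun b => Bool.rec (motive := fun b => F G H b →* Coprod G H)
    (Coprod.inr.comp (MulEquiv.ulift : ULift H ≃* H).toMonoidHom)
    (Coprod.inl.comp (MulEquiv.ulift : ULift G ≃* G).toMonoidHom) b

def e : Coprod G H ≃* CoprodI (F G H) :=
  MonoidHom.toMulEquiv (φ G H) (ψ G H)
    (by
      apply Coprod.hom_ext <;> ext x <;>
        · rw [MonoidHom.comp_apply]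
          erw [CoprodI.lift_of]
          try simp)
    (by
      apply CoprodI.ext_hom
      intro b
      cases b <;> ext x <;>
        · rw [MonoidHom.comp_apply]
          erw [CoprodI.lift_of]
          try simp)

end FPAux2

theorem finite_normal_subgroup_of_free_product_is_trivial
    (G H : Type*) [Group G] [Group H] [Finite G] [Finite H]
    [Nontrivial G] [Nontrivial H]
    (N : Subgroup (Monoid.Coprod G H)) (hN : N.Normal) (hfin : Finite N) :
    N = ⊥ := by
  rw [Subgroup.eq_bot_iff_forall]
  intro x hxN
  by_contra hx1
  set e := FPAux2.e G H with he
  have hex : e x ≠ 1 := fun h => hx1 (by simpa using e.injective (by simpa using h))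
  have hfac : ∀ i : Bool, ∃ (k : Bool) (m : FPAux2.F G H k), k ≠ i ∧ m ≠ 1 := by
    intro i
    cases i
    · obtain ⟨m, hm⟩ := exists_ne (1 : ULift.{_} G)
      exact ⟨true, m, by simp, hm⟩
    · obtain ⟨m, hm⟩ := exists_ne (1 : ULift.{_} H)
      exact ⟨false, m, by simp, hm⟩
  obtain ⟨c, hc⟩ := FPAux.exists_conj_aux (e x) hex hfac
  set d := e.symm c with hd
  set z := x * (d * x * d⁻¹) with hz
  have hzN : z ∈ N := mul_mem hxN (hN.conj_mem x hxN d)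
  have hzpow : ∀ n : ℕ, n ≠ 0 → z ^ n ≠ 1 := by
    intro n hn h1
    apply hc n hn
    have := congrArg e h1
    rw [map_pow, map_one] at this
    rw [← this]
    congr 1
    rw [hz]
    simp [hd, map_mul]
  have hinj : Function.Injective (fun n : ℕ => (⟨z ^ n, pow_mem hzN n⟩ : N)) := by
    intro a b hab
    simp only [Subtype.mk.injEq] at hab
    by_contra hne
    rcases Nat.lt_or_ge a b with h | h
    · apply hzpow (b - a) (by omega)
      have : z ^ a * z ^ (b - a) = z ^ a * 1 := by
        rw [← pow_add, Nat.add_sub_cancel' h.le, ← hab, mul_one]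
      exact mul_left_cancel this
    · have h' : b < a := by omega
      apply hzpow (a - b) (by omega)
      have : z ^ b * z ^ (a - b) = z ^ b * 1 := by
        rw [← pow_add, Nat.add_sub_cancel' h'.le, hab, mul_one]
      exact mul_left_cancel this
  obtain ⟨a, b, hne, h⟩ := Finite.exists_ne_map_eq_of_infinite
    (fun n : ℕ => (⟨z ^ n, pow_mem hzN n⟩ : N))
  exact hne (hinj h)
end

section
/- Let G and H be nontrivial finite groups and let δ : G ∗ H → M be a group homomorphism from the free product G ∗ H to a group M. If the kernel of δ is finite, then δ is injective. -/
set_option linter.unusedSectionVars false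

namespace FPAux

open Monoid Monoid.CoprodI List

variable {ι : Type*} [DecidableEq ι] {M : ι → Type*} [∀ i, Group (M i)]

/-- inverse-reverse of a letter list -/
def invRev (l : List (Σ i, M i)) : List (Σ i, M i) :=
  (l.map fun p => ⟨p.1, p.2⁻¹⟩).reverse

lemma prod_invRev (l : List (Σ i, M i)) :
    ((invRev l).map fun p => of p.2).prod = ((l.map fun p => of p.2).prod)⁻¹ := by
  induction l with
  | nil => simp [invRev]
  | cons a t ih =>
      simp [invRev, List.map_append, List.prod_append, List.map_reverse] at *
      simp [ih, mul_assoc]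

lemma word_prod_injective :
    Function.Injective (Word.prod (M := M)) := by
  classical
  exact fun a b hab => (Word.equiv (M := M)).symm.injective hab

lemma eq_of_word_prod_eq {l₁ l₂ : List (Σ i, M i)}
    (h₁ : ∀ p ∈ l₁, p.2 ≠ 1) (h₁' : l₁.Chain' fun p q => p.1 ≠ q.1)
    (h₂ : ∀ p ∈ l₂, p.2 ≠ 1) (h₂' : l₂.Chain' fun p q => p.1 ≠ q.1)
    (h : (l₁.map fun p => of p.2).prod = (l₂.map fun p => of p.2).prod) : l₁ = l₂ := by
  have : (⟨l₁, h₁, h₁'⟩ : Word M) = ⟨l₂, h₂, h₂'⟩ := word_prod_injective h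
  exact congrArg Word.toList this

lemma word_prod_ne_one {l : List (Σ i, M i)}
    (h₁ : ∀ p ∈ l, p.2 ≠ 1) (h₁' : l.Chain' fun p q => p.1 ≠ q.1)
    (hne : l ≠ []) : (l.map fun p => of p.2).prod ≠ 1 := by
  intro h
  have : l = ([] : List (Σ i, M i)) := by
    refine eq_of_word_prod_eq h₁ h₁' (by simp) (by exact List.isChain_nil) ?_
    simpa using h
  exact hne this

lemma mem_invRev {p : Σ i, M i} {l : List (Σ i, M i)} :
    p ∈ invRev l ↔ ∃ q ∈ l, p = ⟨q.1, q.2⁻¹⟩ := by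
  simp only [invRev, List.mem_reverse, List.mem_map]
  constructor
  · rintro ⟨q, hq, rfl⟩; exact ⟨q, hq, rfl⟩
  · rintro ⟨q, hq, rfl⟩; exact ⟨q, hq, rfl⟩

lemma chain'_invRev {l : List (Σ i, M i)}
    (h : l.Chain' fun p q => p.1 ≠ q.1) :
    (invRev l).Chain' fun p q => p.1 ≠ q.1 := by
  unfold List.Chain' at h ⊢
  rw [invRev, List.isChain_reverse, List.isChain_map]
  exact h.imp fun a b hab => fun hba => hab (by simpa using hba.symm)

lemma pow_word {l : List (Σ i, M i)}
    (h₁ : ∀ p ∈ l, p.2 ≠ 1) (h₁' : l.Chain' fun p q => p.1 ≠ q.1)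
    (hne : l ≠ [])
    (hcyc : (l.getLast hne).1 ≠ (l.head hne).1) :
    ∀ k : ℕ, ∃ (l' : List (Σ i, M i)) (hne' : l' ≠ []),
      (∀ p ∈ l', p.2 ≠ 1) ∧ (l'.Chain' fun p q => p.1 ≠ q.1) ∧
      l'.head hne' = l.head hne ∧
      (l'.map fun p => of p.2).prod = ((l.map fun p => of p.2).prod) ^ (k+1) := by
  intro k
  induction k with
  | zero => exact ⟨l, hne, h₁, h₁', rfl, by simp⟩
  | succ k ih =>
      obtain ⟨l', hne', hn1, hch, hhd, hprod⟩ := ih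
      refine ⟨l ++ l', by simp [hne], ?_, ?_, ?_, ?_⟩
      · intro p hp
        rcases List.mem_append.1 hp with h | h
        exacts [h₁ p h, hn1 p h]
      · refine List.IsChain.append h₁' hch ?_
        intro x hx y hy
        rw [List.getLast?_eq_getLast hne, Option.mem_some_iff] at hx
        rw [List.head?_eq_head hne', Option.mem_some_iff] at hy
        subst hx; subst hy
        rw [hhd]; exact hcyc
      · rw [List.head_append_of_ne_nil hne]
      · rw [List.map_append, List.prod_append, hprod]
        group

/-- powers of a cyclically reduced word are nontrivial -/
lemma pow_ne_one {l : List (Σ i, M i)}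
    (h₁ : ∀ p ∈ l, p.2 ≠ 1) (h₁' : l.Chain' fun p q => p.1 ≠ q.1)
    (hne : l ≠ [])
    (hcyc : (l.getLast hne).1 ≠ (l.head hne).1)
    {k : ℕ} (hk : 1 ≤ k) : ((l.map fun p => of p.2).prod) ^ k ≠ 1 := by
  obtain ⟨k, rfl⟩ : ∃ m, k = m + 1 := ⟨k - 1, by omega⟩
  obtain ⟨l', hne', hn1, hch, -, hprod⟩ := pow_word h₁ h₁' hne hcyc k
  rw [← hprod]
  exact word_prod_ne_one hn1 hch hne'

/-- conjugation into a factor -/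
lemma conj_into (n : ℕ) : ∀ (l : List (Σ i, M i)), l.length ≤ n →
    ∀ (_h₁ : ∀ p ∈ l, p.2 ≠ 1) (_h₁' : l.Chain' fun p q => p.1 ≠ q.1)
    (i : ι) (a b : M i), a ≠ 1 →
    (l.map fun p => of p.2).prod * of a * ((l.map fun p => of p.2).prod)⁻¹ = of b →
    ∃ c : M i, (l.map fun p => of p.2).prod = of c := by
  induction n with
  | zero =>
      intro l hl _ _ i a b _ _
      have : l = [] := List.length_eq_zero_iff.1 (Nat.le_zero.1 hl)
      subst this
      exact ⟨1, by simp⟩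
  | succ n ih =>
      intro l hl h₁ h₁' i a b ha hconj
      rcases List.eq_nil_or_concat l with rfl | ⟨l', p, rfl⟩
      · exact ⟨1, by simp⟩
      rw [List.concat_eq_append] at hl h₁ h₁' hconj ⊢
      set X := ((l' ++ [p]).map fun p => of p.2).prod with hX
      have hb : b ≠ 1 := by
        intro hb1
        rw [hb1, map_one] at hconj
        have h2 : (of a : CoprodI M) = 1 := by
          calc (of a : CoprodI M) = X⁻¹ * (X * of a * X⁻¹) * X := by group
            _ = 1 := by rw [hconj]; group
        exact ha (of_injective i (h2.trans (map_one (of (M := M) (i := i))).symm))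
      by_cases hpi : p.1 = i
      · -- last letter is in factor i: strip it and recurse
        obtain ⟨j, c⟩ := p
        dsimp at hpi
        subst hpi
        set P := (l'.map fun p => of p.2).prod with hP
        have hx : X = P * of c := by
          simp [hX, List.map_append, List.prod_append, hP]
        rw [hx] at hconj
        have h2 : P * of (c * a * c⁻¹) * P⁻¹ = of b := by
          rw [map_mul, map_mul, map_inv]
          calc P * (of c * of a * (of c)⁻¹) * P⁻¹
              = P * of c * of a * (P * of c)⁻¹ := by group
            _ = of b := hconj
        have hca : c * a * c⁻¹ ≠ 1 := by
          intro h
          apply ha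
          have := congrArg (fun x => c⁻¹ * x * c) h
          simpa [mul_assoc] using this
        have hlen : l'.length ≤ n := by
          have := hl; simp at this; omega
        obtain ⟨c', hc'⟩ := ih l' hlen
          (fun q hq => h₁ q (by simp [hq]))
          (h₁'.prefix ⟨[⟨j, c⟩], rfl⟩) j (c * a * c⁻¹) b hca h2
        refine ⟨c' * c, ?_⟩
        rw [hx, show P = of c' from hc', map_mul]
      · -- last letter not in factor i: the conjugate is a long reduced word, contradiction
        exfalso
        set u := l' ++ [p] with hu
        have hune : u ≠ [] := by simp [hu]
        have hlast : u.getLast hune = p := by simp [hu]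
        have hbig1 : ∀ q ∈ u ++ ⟨i, a⟩ :: invRev u, q.2 ≠ 1 := by
          intro q hq
          rcases List.mem_append.1 hq with h | h
          · exact h₁ q h
          · rcases List.mem_cons.1 h with rfl | h
            · exact ha
            · obtain ⟨r, hr, rfl⟩ := mem_invRev.1 h
              simpa using h₁ r hr
        have hbig2 : (u ++ ⟨i, a⟩ :: invRev u).Chain' fun p q => p.1 ≠ q.1 := by
          refine List.IsChain.append h₁' ?_ ?_
          · rw [List.isChain_cons]
            refine ⟨?_, chain'_invRev h₁'⟩
            intro y hy
            have hinv : invRev u = ⟨p.1, p.2⁻¹⟩ :: invRev l' := by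
              simp [invRev, hu]
            rw [hinv] at hy
            simp only [List.head?_cons, Option.mem_some_iff] at hy
            subst hy
            exact fun h => hpi h.symm
          · intro x hx y hy
            rw [List.getLast?_eq_getLast hune, Option.mem_some_iff] at hx
            simp only [List.head?_cons, Option.mem_some_iff] at hy
            subst hx; subst hy
            rw [hlast]
            exact hpi
        have hprodbig : ((u ++ ⟨i, a⟩ :: invRev u).map fun q => of q.2).prod = of b := by
          rw [List.map_append, List.prod_append, List.map_cons, List.prod_cons,
            prod_invRev]
          rw [← mul_assoc]
          rw [show ((u.map fun q => of q.2).prod) = X from rfl]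
          exact hconj
        have heq : u ++ ⟨i, a⟩ :: invRev u = [⟨i, b⟩] := by
          refine eq_of_word_prod_eq hbig1 hbig2 ?_ ?_ ?_
          · intro q hq; simp at hq; subst hq; exact hb
          · exact List.isChain_singleton _
          · rw [hprodbig]; simp
        have := congrArg List.length heq
        simp [invRev, hu] at this
        omega

lemma conj_into' (x : CoprodI M) {i : ι} {a b : M i} (ha : a ≠ 1)
    (h : x * of a * x⁻¹ = of b) : ∃ c : M i, x = of c := by
  classical
  set wd := Word.equiv (M := M) x with hwd
  have hx : (wd.toList.map fun p => of p.2).prod = x :=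
    (Word.equiv (M := M)).symm_apply_apply x
  obtain ⟨c, hc⟩ := conj_into wd.toList.length wd.toList le_rfl wd.ne_one wd.chain_ne
    i a b ha (by rw [hx]; exact h)
  exact ⟨c, by rw [← hx, hc]⟩

theorem normal_finite_eq_bot
    [∀ i, Finite (M i)]
    {i₀ i₁ : ι} (hio : i₀ ≠ i₁) (g : M i₀) (h : M i₁) (hg : g ≠ 1) (hh : h ≠ 1)
    (N : Subgroup (CoprodI M)) [N.Normal] (hN : Finite N) : N = ⊥ := by
  classical
  haveI := hN
  set w : CoprodI M := of g * of h with hwdef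
  have hwl : ∀ k : ℕ, 1 ≤ k → w ^ k ≠ 1 := by
    intro k hk
    have hne : ([⟨i₀, g⟩, ⟨i₁, h⟩] : List (Σ i, M i)) ≠ [] := by simp
    have hone : ∀ p ∈ ([⟨i₀, g⟩, ⟨i₁, h⟩] : List (Σ i, M i)), p.2 ≠ 1 := by
      rintro p hp
      rcases List.mem_cons.1 hp with rfl | hp
      · exact hg
      · rcases List.mem_cons.1 hp with rfl | hp
        · exact hh
        · simp at hp
    have := pow_ne_one (l := [⟨i₀, g⟩, ⟨i₁, h⟩]) hone
      (by simp [List.Chain', List.isChain_cons_cons, hio]) hne (by simpa using hio.symm) hk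
    simpa using this
  haveI : Finite (MulAut ↥N) :=
    Finite.of_injective (fun e : MulAut ↥N => (e : ↥N → ↥N))
      DFunLike.coe_injective
  set d := orderOf (MulAut.conjNormal (G := CoprodI M) (H := N) w) with hd
  have hdpos : 0 < d := orderOf_pos _
  set u := w ^ d with hu
  have hucent : ∀ x ∈ N, u * x * u⁻¹ = x := by
    intro x hx
    have h1 : MulAut.conjNormal (G := CoprodI M) (H := N) u = 1 := by
      rw [hu, map_pow, hd, pow_orderOf_eq_one]
    have h2 := congrArg (fun e : MulAut ↥N => ((e ⟨x, hx⟩ : ↥N) : CoprodI M)) h1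
    simpa [MulAut.conjNormal_apply] using h2
  have hupow : ∀ k, 1 ≤ k → u ^ k ≠ 1 := by
    intro k hk
    rw [hu, ← pow_mul]
    exact hwl _ (Nat.one_le_iff_ne_zero.2 (by positivity))
  have key : ∀ (L : ℕ) (l : List (Σ i, M i)), l.length ≤ L →
      (∀ p ∈ l, p.2 ≠ 1) → (l.Chain' fun p q => p.1 ≠ q.1) →
      (l.map fun p => of p.2).prod ∈ N → (l.map fun p => of p.2).prod ≠ 1 → False := by
    intro L
    induction L with
    | zero =>
        intro l hl _ _ _ hne
        have : l = [] := List.length_eq_zero_iff.1 (Nat.le_zero.1 hl)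
        subst this
        simp at hne
    | succ L ih =>
        intro l hl h1 h2 hmem hne
        rcases l with _ | ⟨p, t⟩
        · simp at hne
        rcases List.eq_nil_or_concat t with rfl | ⟨m, q, rfl⟩
        · -- single letter
          have hx : (([p] : List (Σ i, M i)).map fun r => of r.2).prod = of p.2 := by simp
          rw [hx] at hmem hne
          have hint : u * of p.2 * u⁻¹ = of p.2 := hucent _ hmem
          obtain ⟨c, hc⟩ := conj_into' u (h1 p (by simp)) hint
          have huc : u ^ (orderOf c) = 1 := by
            rw [hc, ← map_pow, pow_orderOf_eq_one, map_one]
          exact hupow _ (orderOf_pos c) huc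
        · rw [List.concat_eq_append] at hl h1 h2 hmem hne
          obtain ⟨jq, cq⟩ := q
          obtain ⟨jp, cp⟩ := p
          by_cases hlast : jq = jp
          · -- head and last in same factor: conjugate to shorter word
            subst hlast
            set P := (m.map fun r => of r.2).prod with hP
            have hx : ((⟨jq, cp⟩ :: (m ++ [⟨jq, cq⟩]) : List (Σ i, M i)).map
                fun r => of r.2).prod = of cp * (P * of cq) := by
              simp [List.map_append, List.prod_append, hP, mul_assoc]
            rw [hx] at hmem hne
            have hmem' : P * of (cq * cp) ∈ N := by
              have := Subgroup.Normal.conj_mem ‹N.Normal› _ hmem ((of cp)⁻¹)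
              have heq : (of cp)⁻¹ * (of cp * (P * of cq)) * ((of cp)⁻¹)⁻¹
                  = P * of (cq * cp) := by
                rw [map_mul]; group
              rwa [heq] at this
            have hne' : P * of (cq * cp) ≠ 1 := by
              intro hone
              apply hne
              have : of cp * (P * of cq) =
                  of cp * (P * of (cq * cp)) * (of cp)⁻¹ := by
                rw [map_mul]; group
              rw [this, hone]; group
            have hchain : (m ++ [(⟨jq, cq⟩ : Σ i, M i)]).Chain' fun p q => p.1 ≠ q.1 :=
              (List.isChain_cons.1 h2).2
            by_cases hqp : cq * cp = 1
            · rw [hqp, map_one, mul_one] at hmem' hne'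
              refine ih m ?_ (fun r hr => h1 r (by simp [hr])) ?_ hmem' hne'
              · have := hl; simp at this ⊢; omega
              · exact hchain.prefix ⟨[⟨jq, cq⟩], rfl⟩
            · refine ih (m ++ [⟨jq, cq * cp⟩]) ?_ ?_ ?_ ?_ ?_
              · have := hl; simp at this ⊢; omega
              · intro r hr
                rcases List.mem_append.1 hr with hr | hr
                · exact h1 r (by simp [hr])
                · rcases List.mem_singleton.1 hr with rfl
                  exact hqp
              · simp only [List.Chain'] at hchain ⊢
                rw [List.isChain_append] at hchain ⊢
                refine ⟨hchain.1, List.isChain_singleton _, ?_⟩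
                intro x hx' y hy'
                simp only [List.head?_cons, Option.mem_some_iff] at hy'
                subst hy'
                exact hchain.2.2 x hx' ⟨jq, cq⟩ (by simp)
              · rw [List.map_append, List.prod_append]
                simpa using hmem'
              · rw [List.map_append, List.prod_append]
                simpa using hne'
          · -- cyclically reduced word of length ≥ 2 : infinite order
            have hnel : ((⟨jp, cp⟩ : Σ i, M i) :: (m ++ [⟨jq, cq⟩])) ≠ [] := by simp
            have hcyc : (((⟨jp, cp⟩ : Σ i, M i) :: (m ++ [⟨jq, cq⟩])).getLast hnel).1
                ≠ (((⟨jp, cp⟩ : Σ i, M i) :: (m ++ [⟨jq, cq⟩])).head hnel).1 := by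
              have hgl : ((⟨jp, cp⟩ : Σ i, M i) :: (m ++ [⟨jq, cq⟩])).getLast hnel
                  = ⟨jq, cq⟩ := by
                rw [List.getLast_cons (by simp)]
                exact List.getLast_append _
              rw [hgl]
              simpa using hlast
            set x := (((⟨jp, cp⟩ : Σ i, M i) :: (m ++ [⟨jq, cq⟩])).map
              fun r => of r.2).prod with hxdef
            set k := orderOf (⟨x, hmem⟩ : ↥N) with hk
            have hkpos : 0 < k := orderOf_pos _
            have hxk : x ^ k = 1 := by
              have h0 := congrArg Subtype.val (pow_orderOf_eq_one (⟨x, hmem⟩ : ↥N))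
              rw [SubmonoidClass.coe_pow] at h0
              exact h0
            exact pow_ne_one h1 h2 hnel hcyc hkpos hxk
  refine (Subgroup.eq_bot_iff_forall N).2 fun n hn => ?_
  by_contra hn1
  set wd := Word.equiv (M := M) n with hwd
  have hx : (wd.toList.map fun p => of p.2).prod = n :=
    (Word.equiv (M := M)).symm_apply_apply n
  exact key wd.toList.length wd.toList le_rfl wd.ne_one wd.chain_ne
    (by rw [hx]; exact hn) (by rw [hx]; exact hn1)

/-- The two-factor family indexed by `Bool`. -/
def Fb (G : Type u) (H : Type v) : Bool → Type (max u v) :=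
  fun b => cond b (ULift.{v} G) (ULift.{u} H)

instance FbGroup (G H : Type*) [Group G] [Group H] : ∀ b, Group (Fb G H b) := fun b => by
  cases b <;> (dsimp [Fb]; infer_instance)

instance FbFinite (G H : Type*) [Group G] [Group H] [Finite G] [Finite H] :
    ∀ b, Finite (Fb G H b) := fun b => by
  cases b <;> (dsimp [Fb]; infer_instance)

variable (G : Type u) (H : Type v) [Group G] [Group H]

/-- From the binary coproduct to the indexed coproduct. -/
def toI : Monoid.Coprod G H →* CoprodI (Fb G H) :=
  Coprod.lift
    ((CoprodI.of (M := Fb G H) (i := true)).comp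
      (MulEquiv.ulift (α := G)).symm.toMonoidHom)
    ((CoprodI.of (M := Fb G H) (i := false)).comp
      (MulEquiv.ulift (α := H)).symm.toMonoidHom)

/-- From the indexed coproduct to the binary coproduct. -/
def ofI : CoprodI (Fb G H) →* Monoid.Coprod G H :=
  CoprodI.lift (fun b => Bool.rec (motive := fun b => Fb G H b →* Monoid.Coprod G H)
    (Coprod.inr.comp (MulEquiv.ulift (α := H)).toMonoidHom)
    (Coprod.inl.comp (MulEquiv.ulift (α := G)).toMonoidHom) b)

lemma ofI_comp_toI : (ofI G H).comp (toI G H) = MonoidHom.id _ := by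
  refine Coprod.hom_ext ?_ ?_
  · ext x
    simp only [toI, ofI, MonoidHom.comp_apply, MonoidHom.id_apply,
      Coprod.lift_apply_inl, CoprodI.lift_of, MulEquiv.coe_toMonoidHom]
    exact congrArg Coprod.inl (MulEquiv.apply_symm_apply (MulEquiv.ulift : ULift.{v} G ≃* G) x)
  · ext x
    simp only [toI, ofI, MonoidHom.comp_apply, MonoidHom.id_apply,
      Coprod.lift_apply_inr, CoprodI.lift_of, MulEquiv.coe_toMonoidHom]
    exact congrArg Coprod.inr (MulEquiv.apply_symm_apply (MulEquiv.ulift : ULift.{u} H ≃* H) x)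

lemma toI_comp_ofI : (toI G H).comp (ofI G H) = MonoidHom.id _ := by
  refine CoprodI.ext_hom _ _ fun i => ?_
  cases i <;>
    (ext x
     simp only [toI, ofI, MonoidHom.comp_apply, MonoidHom.id_apply,
       Coprod.lift_apply_inl, Coprod.lift_apply_inr, CoprodI.lift_of,
       MulEquiv.coe_toMonoidHom]
     exact congrArg CoprodI.of (MulEquiv.symm_apply_apply MulEquiv.ulift x))

lemma toI_injective : Function.Injective (toI G H) := fun a b hab => by
  have := congrArg (ofI G H) hab
  rwa [← MonoidHom.comp_apply, ← MonoidHom.comp_apply, ofI_comp_toI,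
    MonoidHom.id_apply, MonoidHom.id_apply] at this

lemma ofI_injective : Function.Injective (ofI G H) := fun a b hab => by
  have := congrArg (toI G H) hab
  rwa [← MonoidHom.comp_apply, ← MonoidHom.comp_apply, toI_comp_ofI,
    MonoidHom.id_apply, MonoidHom.id_apply] at this

end FPAux

theorem free_product_hom_injective_of_finite_kernel
    (G H M : Type*) [Group G] [Group H] [Group M] [Finite G] [Finite H]
    [Nontrivial G] [Nontrivial H]
    (δ : Monoid.Coprod G H →* M) (hker : Finite δ.ker) :
    Function.Injective δ := by
  classical
  obtain ⟨g, hg⟩ := exists_ne (1 : G)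
  obtain ⟨h, hh⟩ := exists_ne (1 : H)
  set δ' := δ.comp (FPAux.ofI G H) with hδ'
  haveI : Finite δ'.ker := by
    refine Finite.of_injective (fun x : δ'.ker => (⟨FPAux.ofI G H x.1, x.2⟩ : δ.ker)) ?_
    intro a b hab
    have := congrArg Subtype.val hab
    exact Subtype.ext (FPAux.ofI_injective G H this)
  have hbot : δ'.ker = ⊥ :=
    FPAux.normal_finite_eq_bot (M := FPAux.Fb G H) (i₀ := true) (i₁ := false)
      (by simp) (ULift.up g) (ULift.up h)
      (fun hc => hg (congrArg ULift.down hc))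
      (fun hc => hh (congrArg ULift.down hc)) δ'.ker ‹_›
  have hinj' : Function.Injective δ' := (MonoidHom.ker_eq_bot_iff δ').1 hbot
  intro x y hxy
  apply FPAux.toI_injective G H
  apply hinj'
  show δ (FPAux.ofI G H (FPAux.toI G H x)) = δ (FPAux.ofI G H (FPAux.toI G H y))
  have hx := congrArg δ (DFunLike.congr_fun (FPAux.ofI_comp_toI G H) x)
  have hy := congrArg δ (DFunLike.congr_fun (FPAux.ofI_comp_toI G H) y)
  rw [MonoidHom.comp_apply] at hx hy
  rw [hx, hy]
  exact hxy
end
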